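/- Fix an integer g > 2, a vertex set Z, and a g-sphere-cover ○_g Z of Z. Let 𝒞 = ⋃_T 𝓑^○(T), the union over all 3-element subsets T of Z. If a graph L on the vertex set Z is triangle-decomposable, then L ∪ ○_g Z has a triangle-decomposition using only triangles of 𝒞, and this triangle-decomposition has girth greater than g. -/

import Mathlib

open Finset

/-- `t` is a triangle of the graph `G`. -/
def IsTriangle {V : Type*} (G : SimpleGraph V) (t : Finset V) : Prop :=
  t.card = 3 ∧ ∀ x ∈ t, ∀ y ∈ t, x ≠ y → G.Adj x y

/-- `S` is a triangle-decomposition of `G`: its members are triangles of `G`, and every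
edge of `G` lies in exactly one of them. -/
def IsTriangleDecomp {V : Type*} (G : SimpleGraph V) (S : Finset (Finset V)) : Prop :=
  (∀ t ∈ S, IsTriangle G t) ∧ ∀ x y, G.Adj x y → ∃! t, t ∈ S ∧ x ∈ t ∧ y ∈ t

/-- The triple system `S` has girth greater than `g`. -/
def GirthGt {V : Type*} [DecidableEq V] (g : ℕ) (S : Finset (Finset V)) : Prop :=
  ∀ C ⊆ S, 2 ≤ C.card → C.card + 2 ≤ g → C.card + 3 ≤ (C.sup id).card

/-- The set `𝓑^○(T)` of triangles of the in- and out-decompositions of the `g`-sphere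
appended to a triple with vertices `a, b 1, b 2` and new vertices `b 3, …, b (2g), c`. -/
def sphereB {V : Type*} [DecidableEq V] (g : ℕ) (a c : V) (b : ℕ → V) :
    Finset (Finset V) :=
  ((Finset.Icc 2 (2 * g)).image fun i =>
    ({if i % 2 = 0 then c else a, b i, b (if i = 2 * g then 1 else i + 1)} : Finset V)) ∪
  ((Finset.Icc 1 (2 * g)).image fun i =>
    ({if i % 2 = 1 then c else a, b i, b (if i = 2 * g then 1 else i + 1)} : Finset V))

/-- The adjacency relation of the `g`-sphere appended to a triple with vertices
`a, b 1, b 2`: edges `a-b j` for `3 ≤ j ≤ 2g`, `c-b j` for `1 ≤ j ≤ 2g`,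
`b j - b (j+1)` for `2 ≤ j ≤ 2g-1`, and `b (2g) - b 1`. -/
def sphereAdjP {V : Type*} (g : ℕ) (a c : V) (b : ℕ → V) (x y : V) : Prop :=
  (∃ j, 3 ≤ j ∧ j ≤ 2 * g ∧ ((x = a ∧ y = b j) ∨ (y = a ∧ x = b j))) ∨
  (∃ j, 1 ≤ j ∧ j ≤ 2 * g ∧ ((x = c ∧ y = b j) ∨ (y = c ∧ x = b j))) ∨
  (∃ j, 2 ≤ j ∧ j ≤ 2 * g - 1 ∧
    ((x = b j ∧ y = b (j + 1)) ∨ (y = b j ∧ x = b (j + 1)))) ∨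
  ((x = b (2 * g) ∧ y = b 1) ∨ (y = b (2 * g) ∧ x = b 1))

namespace SphereAux

def nxt (g i : ℕ) : ℕ := if i = 2*g then 1 else i+1
def prv (g j : ℕ) : ℕ := if j = 1 then 2*g else j - 1
def apx {V : Type*} (p : ℕ) (a c : V) (i : ℕ) : V := if i % 2 = p then c else a
def tri {V : Type*} [DecidableEq V] (g p : ℕ) (a c : V) (b : ℕ → V) (i : ℕ) : Finset V :=
  {apx p a c i, b i, b (nxt g i)}
def dom (g p : ℕ) : Finset ℕ := Finset.Icc (if p = 1 then 1 else 2) (2*g)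
def decS {V : Type*} [DecidableEq V] (g p : ℕ) (a c : V) (b : ℕ → V) : Finset (Finset V) :=
  (dom g p).image (tri g p a c b)

section Basic
variable {g p i j : ℕ}

lemma dom_subset : dom g p ⊆ Finset.Icc 1 (2*g) := by
  unfold dom; split <;> intro x hx <;> simp only [mem_Icc] at * <;> omega

lemma mem_dom : i ∈ dom g p ↔ ((p = 1 ∧ 1 ≤ i) ∨ (p ≠ 1 ∧ 2 ≤ i)) ∧ i ≤ 2*g := by
  unfold dom; split <;> rename_i h <;> simp [mem_Icc, h] <;> omega

lemma nxt_mem (hg : 2 < g) (h : i ∈ Finset.Icc 1 (2*g)) : nxt g i ∈ Finset.Icc 1 (2*g) := by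
  simp only [mem_Icc] at *; unfold nxt; split <;> omega

lemma nxt_ne (hg : 2 < g) (h : i ∈ Finset.Icc 1 (2*g)) : nxt g i ≠ i := by
  simp only [mem_Icc] at h; unfold nxt; split <;> omega

lemma nxt_parity (hg : 2 < g) (h : i ∈ Finset.Icc 1 (2*g)) : (nxt g i) % 2 ≠ i % 2 := by
  simp only [mem_Icc] at h; unfold nxt; split <;> omega

lemma nxt_inj (hg : 2 < g) (hi : i ∈ Finset.Icc 1 (2*g)) (hj : j ∈ Finset.Icc 1 (2*g))
    (h : nxt g i = nxt g j) : i = j := by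
  simp only [mem_Icc] at *; unfold nxt at h; split at h <;> split at h <;> omega

lemma nxt_nxt_ne (hg : 2 < g) (hi : i ∈ Finset.Icc 1 (2*g)) : nxt g (nxt g i) ≠ i := by
  simp only [mem_Icc] at hi; unfold nxt; split <;> split <;> omega

lemma prv_mem (hg : 2 < g) (h : j ∈ Finset.Icc 1 (2*g)) : prv g j ∈ Finset.Icc 1 (2*g) := by
  simp only [mem_Icc] at *; unfold prv; split <;> omega

lemma nxt_prv (hg : 2 < g) (h : j ∈ Finset.Icc 1 (2*g)) : nxt g (prv g j) = j := by
  simp only [mem_Icc] at h; unfold nxt prv; split <;> split <;> omega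

lemma prv_parity (hg : 2 < g) (h : j ∈ Finset.Icc 1 (2*g)) : (prv g j) % 2 ≠ j % 2 := by
  simp only [mem_Icc] at h; unfold prv; split <;> omega

end Basic

section Sphere
variable {V : Type*} [DecidableEq V] {g p : ℕ} {a c : V} {b : ℕ → V}
  (hg : 2 < g)
  (hb : ∀ i ∈ Finset.Icc 1 (2*g), ∀ j ∈ Finset.Icc 1 (2*g), b i = b j → i = j)
  (hba : ∀ i ∈ Finset.Icc 1 (2*g), b i ≠ a ∧ b i ≠ c)
  (hac : a ≠ c)

lemma mem_tri {x : V} {i : ℕ} :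
    x ∈ tri g p a c b i ↔ x = apx p a c i ∨ x = b i ∨ x = b (nxt g i) := by
  simp [tri]

lemma apx_eq_or : apx p a c i = a ∨ apx p a c i = c := by
  unfold apx; split <;> simp

include hba in
lemma apx_ne_b {i m : ℕ} (hm : m ∈ Finset.Icc 1 (2*g)) : apx p a c i ≠ b m := by
  rcases apx_eq_or (p := p) (a := a) (c := c) (i := i) with h | h <;> rw [h]
  · exact fun h' => (hba m hm).1 h'.symm
  · exact fun h' => (hba m hm).2 h'.symm

include hac in
lemma apx_inj {i j : ℕ} (h : apx p a c i = apx p a c j) : (i % 2 = p ↔ j % 2 = p) := by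
  unfold apx at h
  split at h <;> split at h <;> simp_all

include hg hb hba hac in
lemma tri_card {i : ℕ} (hi : i ∈ Finset.Icc 1 (2*g)) : (tri g p a c b i).card = 3 := by
  have h1 := apx_ne_b (p := p) (i := i) hba hi
  have h2 := apx_ne_b (p := p) (i := i) hba (nxt_mem hg hi)
  have h3 : b i ≠ b (nxt g i) := fun h =>
    (nxt_ne hg hi) (hb _ (nxt_mem hg hi) _ hi h.symm)
  rw [tri, card_insert_of_notMem (by simp [h1, h2]), card_insert_of_notMem (by simp [h3])]
  simp

end Sphere


section Sphere
variable {V : Type*} [DecidableEq V] {g p i j : ℕ} {a c : V} {b : ℕ → V}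
  (hg : 2 < g)
  (hb : ∀ i ∈ Finset.Icc 1 (2*g), ∀ j ∈ Finset.Icc 1 (2*g), b i = b j → i = j)
  (hba : ∀ i ∈ Finset.Icc 1 (2*g), b i ≠ a ∧ b i ≠ c)
  (hac : a ≠ c)

include hg hb hba in
lemma shared_cases {v : V} (hi : i ∈ Finset.Icc 1 (2*g)) (hj : j ∈ Finset.Icc 1 (2*g))
    (h1 : v ∈ tri g p a c b i) (h2 : v ∈ tri g p a c b j) :
    (v = apx p a c i ∧ v = apx p a c j) ∨
    (∃ u, (u = i ∨ u = nxt g i) ∧ (u = j ∨ u = nxt g j) ∧ v = b u) := by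
  have hni := nxt_mem hg hi
  have hnj := nxt_mem hg hj
  rcases mem_tri.1 h1 with h1' | h1' | h1' <;> rcases mem_tri.1 h2 with h2' | h2' | h2'
  · exact Or.inl ⟨h1', h2'⟩
  · exact absurd (h1' ▸ h2') (apx_ne_b hba hj)
  · exact absurd (h1' ▸ h2') (apx_ne_b hba hnj)
  · exact absurd (h2' ▸ h1') (apx_ne_b hba hi)
  · exact Or.inr ⟨i, Or.inl rfl, Or.inl (hb i hi j hj (h1' ▸ h2' ▸ rfl)), h1'⟩
  · exact Or.inr ⟨i, Or.inl rfl, Or.inr (hb i hi _ hnj (h1' ▸ h2' ▸ rfl)), h1'⟩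
  · exact absurd (h2' ▸ h1') (apx_ne_b hba hni)
  · exact Or.inr ⟨nxt g i, Or.inr rfl, Or.inl (hb _ hni j hj (h1' ▸ h2' ▸ rfl)), h1'⟩
  · exact Or.inr ⟨nxt g i, Or.inr rfl, Or.inr (hb _ hni _ hnj (h1' ▸ h2' ▸ rfl)), h1'⟩

lemma par_contra (hp : p ≤ 1) (hP : i % 2 = p ↔ j % 2 = p) (hne : i % 2 ≠ j % 2) : False := by
  have hmi : i % 2 < 2 := Nat.mod_lt _ (by norm_num)
  have hmj : j % 2 < 2 := Nat.mod_lt _ (by norm_num)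
  by_cases hip : i % 2 = p
  · have := hP.1 hip; omega
  · have := fun h => hip (hP.2 h); omega

include hg hb hba hac in
lemma tri_unique {x y : V} (hp : p ≤ 1) (hi : i ∈ dom g p) (hj : j ∈ dom g p)
    (hxy : x ≠ y) (hxi : x ∈ tri g p a c b i) (hxj : x ∈ tri g p a c b j)
    (hyi : y ∈ tri g p a c b i) (hyj : y ∈ tri g p a c b j) : i = j := by
  have hi' := dom_subset hi
  have hj' := dom_subset hj
  have hpari := nxt_parity hg hi'
  have hparj := nxt_parity hg hj'
  have f1 : nxt g i = nxt g j → i = j := nxt_inj hg hi' hj'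
  have f2 : i = nxt g j → j = nxt g i → False := by
    intro e1 e2
    exact nxt_nxt_ne hg hj' (by rw [← e1, ← e2])
  -- helper for one apex-shared, one b-shared vertex
  have mixed : ∀ w, (w = i ∨ w = nxt g i) → (w = j ∨ w = nxt g j) →
      (i % 2 = p ↔ j % 2 = p) → i = j := by
    rintro w (rfl | rfl) (h2 | h2) hP
    · exact h2
    · exact absurd hP (fun hP => par_contra hp hP (by rw [h2]; exact hparj))
    · exact absurd hP (fun hP => par_contra hp hP (by rw [← h2]; exact fun he => hpari he.symm))
    · exact f1 h2
  rcases shared_cases hg hb hba hi' hj' hxi hxj with hx' | ⟨u, hu1, hu2, hbu⟩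
  · rcases shared_cases hg hb hba hi' hj' hyi hyj with hy' | ⟨w, hw1, hw2, hbw⟩
    · exact absurd (hx'.1 ▸ hy'.1 ▸ rfl : x = y) hxy
    · exact mixed w hw1 hw2 (apx_inj hac (hx'.1 ▸ hx'.2))
  · rcases shared_cases hg hb hba hi' hj' hyi hyj with hy' | ⟨w, hw1, hw2, hbw⟩
    · exact mixed u hu1 hu2 (apx_inj hac (hy'.1 ▸ hy'.2))
    · have hne : u ≠ w := fun h => hxy (hbu ▸ hbw ▸ h ▸ rfl)
      clear hxi hxj hyi hyj hbu hbw
      rcases hu1 with rfl | rfl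
      · rcases hu2 with h2 | h2
        · exact h2
        · rcases hw1 with rfl | rfl
          · exact absurd rfl hne
          · rcases hw2 with h4 | h4
            · exact (f2 h2 h4.symm).elim
            · exact f1 h4
      · rcases hu2 with h2 | h2
        · rcases hw1 with rfl | rfl
          · rcases hw2 with h4 | h4
            · exact h4
            · exact (f2 h4 h2.symm).elim
          · exact absurd rfl hne
        · exact f1 h2

include hg hb hba hac in
lemma tri_inj_dom (hp : p ≤ 1) (hi : i ∈ dom g p) (hj : j ∈ dom g p)
    (h : tri g p a c b i = tri g p a c b j) : i = j := by
  have hi' := dom_subset hi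
  have hxy : b i ≠ b (nxt g i) := fun he =>
    (nxt_ne hg hi') (hb _ (nxt_mem hg hi') _ hi' he.symm)
  have h1 : b i ∈ tri g p a c b i := mem_tri.2 (Or.inr (Or.inl rfl))
  have h2 : b (nxt g i) ∈ tri g p a c b i := mem_tri.2 (Or.inr (Or.inr rfl))
  exact tri_unique hg hb hba hac hp hi hj hxy h1 (h ▸ h1) h2 (h ▸ h2)

end Sphere


section Sphere3
variable {V : Type*} [DecidableEq V] {g p i j : ℕ} {a c : V} {b : ℕ → V}
  (hg : 2 < g)

lemma apx_eq_c (hip : i % 2 = p) : apx p a c i = c := if_pos hip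
lemma apx_eq_a (hip : i % 2 ≠ p) : apx p a c i = a := if_neg hip

include hg in
lemma cover_c (hp : p ≤ 1) (hj : j ∈ Finset.Icc 1 (2*g)) :
    ∃ i ∈ dom g p, c ∈ tri g p a c b i ∧ b j ∈ tri g p a c b i := by
  by_cases hcase : j % 2 = p
  · refine ⟨j, ?_, ?_, mem_tri.2 (Or.inr (Or.inl rfl))⟩
    · simp only [mem_Icc] at hj; rw [mem_dom]; omega
    · rw [mem_tri, apx_eq_c hcase]; exact Or.inl rfl
  · have hpj := prv_mem hg hj
    have hpar := prv_parity hg hj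
    have hjm : j % 2 < 2 := Nat.mod_lt _ (by norm_num)
    have hpm : (prv g j) % 2 < 2 := Nat.mod_lt _ (by norm_num)
    have hprvp : (prv g j) % 2 = p := by omega
    refine ⟨prv g j, ?_, ?_, ?_⟩
    · simp only [mem_Icc] at hpj; rw [mem_dom]; omega
    · rw [mem_tri, apx_eq_c hprvp]; exact Or.inl rfl
    · rw [mem_tri, nxt_prv hg hj]; exact Or.inr (Or.inr rfl)

include hg in
lemma cover_a (hp : p ≤ 1) (hj : j ∈ Finset.Icc 1 (2*g)) (hj3 : p ≠ 1 → 3 ≤ j) :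
    ∃ i ∈ dom g p, a ∈ tri g p a c b i ∧ b j ∈ tri g p a c b i := by
  by_cases hcase : j % 2 = p
  · have hpj := prv_mem hg hj
    have hpar := prv_parity hg hj
    have hprvp : (prv g j) % 2 ≠ p := by omega
    refine ⟨prv g j, ?_, ?_, ?_⟩
    · simp only [mem_Icc] at hpj hj
      rw [mem_dom]
      by_cases h1 : p = 1
      · exact ⟨Or.inl ⟨h1, hpj.1⟩, hpj.2⟩
      · have h3 := hj3 h1
        have hpe : prv g j = j - 1 := by rw [prv, if_neg (by omega)]
        exact ⟨Or.inr ⟨h1, by omega⟩, hpj.2⟩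
    · rw [mem_tri, apx_eq_a hprvp]; exact Or.inl rfl
    · rw [mem_tri, nxt_prv hg hj]; exact Or.inr (Or.inr rfl)
  · refine ⟨j, ?_, ?_, mem_tri.2 (Or.inr (Or.inl rfl))⟩
    · simp only [mem_Icc] at hj
      rw [mem_dom]
      by_cases h1 : p = 1
      · exact ⟨Or.inl ⟨h1, hj.1⟩, hj.2⟩
      · exact ⟨Or.inr ⟨h1, by have := hj3 h1; omega⟩, hj.2⟩
    · rw [mem_tri, apx_eq_a hcase]; exact Or.inl rfl

include hg in
lemma cover_bb (hj1 : 1 ≤ j) (hj2 : j < 2*g) :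
    b j ∈ tri g p a c b j ∧ b (j+1) ∈ tri g p a c b j := by
  constructor
  · exact mem_tri.2 (Or.inr (Or.inl rfl))
  · rw [mem_tri]
    right; right
    rw [nxt, if_neg (by omega)]

include hg in
lemma cover_b2g : b (2*g) ∈ tri g p a c b (2*g) ∧ b 1 ∈ tri g p a c b (2*g) := by
  constructor
  · exact mem_tri.2 (Or.inr (Or.inl rfl))
  · rw [mem_tri]
    right; right
    rw [nxt, if_pos rfl]

include hg in
lemma two_g_mem_dom : 2*g ∈ dom g p := by rw [mem_dom]; by_cases h : p = 1 <;> simp [h] <;> omega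

-- the prv-index used in cover lemmas: if j ≥ 2 then ∈ dom for the b-edge; (not needed)

include hg in
lemma tri_has_new (hp : p ≤ 1) (hi : i ∈ dom g p) :
    ∃ v ∈ tri g p a c b i, v = c ∨ ∃ m, 3 ≤ m ∧ m ≤ 2*g ∧ v = b m := by
  have hi' := dom_subset hi
  simp only [Finset.mem_Icc] at hi'
  rcases Nat.lt_or_ge i 3 with h3 | h3
  · rcases Nat.lt_or_ge i 2 with h2 | h2
    · -- i = 1, so p = 1
      have h1 : i = 1 := by omega
      have hp1 : p = 1 := by
        rw [mem_dom] at hi; rcases hi.1 with h | h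
        · exact h.1
        · omega
      refine ⟨apx p a c i, mem_tri.2 (Or.inl rfl), Or.inl ?_⟩
      rw [apx_eq_c]; omega
    · -- i = 2, use b (nxt 2) = b 3
      have h2' : i = 2 := by omega
      refine ⟨b (nxt g i), mem_tri.2 (Or.inr (Or.inr rfl)), Or.inr ⟨nxt g i, ?_, ?_, rfl⟩⟩
      · rw [nxt]; split <;> omega
      · rw [nxt]; split <;> omega
  · exact ⟨b i, mem_tri.2 (Or.inr (Or.inl rfl)), Or.inr ⟨i, h3, hi'.2, rfl⟩⟩

end Sphere3


section SphereZ
variable {V : Type*} [DecidableEq V] {g p i j : ℕ} {a c : V} {b : ℕ → V} {Z : Finset V}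
  (hg : 2 < g)
  (haZ : a ∈ Z) (hb1Z : b 1 ∈ Z) (hb2Z : b 2 ∈ Z) (hcZ : c ∉ Z)
  (hbZ : ∀ m, 3 ≤ m → m ≤ 2*g → b m ∉ Z)

include hg haZ hcZ hbZ in
lemma triZ_sub (hi : i ∈ Finset.Icc 1 (2*g)) {x : V} (hx : x ∈ tri g p a c b i)
    (hxZ : x ∈ Z) : x = a ∨ x = b 1 ∨ x = b 2 := by
  have hni := nxt_mem hg hi
  simp only [Finset.mem_Icc] at hi hni
  rcases mem_tri.1 hx with h | h | h
  · rcases apx_eq_or (p := p) (a := a) (c := c) (i := i) with h' | h'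
    · exact Or.inl (h.trans h')
    · exact absurd hxZ (by rw [h, h']; exact hcZ)
  · have : i = 1 ∨ i = 2 := by
      by_contra hc
      exact hbZ i (by omega) hi.2 (h ▸ hxZ)
    rcases this with h1 | h1 <;> rw [h1] at h
    · exact Or.inr (Or.inl h)
    · exact Or.inr (Or.inr h)
  · have : nxt g i = 1 ∨ nxt g i = 2 := by
      by_contra hc
      exact hbZ (nxt g i) (by omega) hni.2 (h ▸ hxZ)
    rcases this with h1 | h1 <;> rw [h1] at h
    · exact Or.inr (Or.inl h)
    · exact Or.inr (Or.inr h)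

include hg haZ hb1Z hb2Z in
lemma triZ_new (hi : i ∈ Finset.Icc 1 (2*g)) {x : V} (hx : x ∈ tri g p a c b i)
    (hxZ : x ∉ Z) : x = c ∨ ∃ m, 3 ≤ m ∧ m ≤ 2*g ∧ x = b m := by
  have hni := nxt_mem hg hi
  simp only [Finset.mem_Icc] at hi hni
  rcases mem_tri.1 hx with h | h | h
  · rcases apx_eq_or (p := p) (a := a) (c := c) (i := i) with h' | h'
    · exact absurd (h.trans h' ▸ haZ) hxZ
    · exact Or.inl (h.trans h')
  · refine Or.inr ⟨i, ?_, hi.2, h⟩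
    by_contra hc
    have : i = 1 ∨ i = 2 := by omega
    rcases this with h1 | h1 <;> rw [h1] at h
    · exact hxZ (h ▸ hb1Z)
    · exact hxZ (h ▸ hb2Z)
  · refine Or.inr ⟨nxt g i, ?_, hni.2, h⟩
    by_contra hc
    have : nxt g i = 1 ∨ nxt g i = 2 := by omega
    rcases this with h1 | h1 <;> rw [h1] at h
    · exact hxZ (h ▸ hb1Z)
    · exact hxZ (h ▸ hb2Z)

include hg hcZ hbZ in
lemma triZ_two (hp : p ≤ 1) (hi : i ∈ dom g p) {x y : V} (hxy : x ≠ y)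
    (hx : x ∈ tri g p a c b i) (hy : y ∈ tri g p a c b i)
    (hxZ : x ∈ Z) (hyZ : y ∈ Z) : p = 1 := by
  by_contra hp1
  have hi2 : 2 ≤ i ∧ i ≤ 2*g := by
    rw [mem_dom] at hi
    rcases hi.1 with h | h
    · exact absurd h.1 hp1
    · exact ⟨h.2, hi.2⟩
  have hni := nxt_mem hg (dom_subset hi)
  simp only [Finset.mem_Icc] at hni
  have hnxt2 : nxt g i = 2 → i = 1 := by rw [nxt]; split <;> omega
  have hnxt1 : nxt g i = 1 → i = 2*g := by rw [nxt]; split <;> omega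
  have cls : ∀ v, v ∈ tri g p a c b i → v ∈ Z →
      (v = a ∧ i % 2 ≠ p) ∨ (v = b i ∧ i = 2) ∨ (v = b (nxt g i) ∧ i = 2*g) := by
    intro v hv hvZ
    rcases mem_tri.1 hv with h | h | h
    · by_cases hip : i % 2 = p
      · exact absurd hvZ (by rw [h, apx_eq_c hip]; exact hcZ)
      · exact Or.inl ⟨by rw [h, apx_eq_a hip], hip⟩
    · refine Or.inr (Or.inl ⟨h, ?_⟩)
      by_contra hc
      exact hbZ i (by omega) hi2.2 (h ▸ hvZ)
    · refine Or.inr (Or.inr ⟨h, ?_⟩)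
      by_contra hc
      have h3 : 3 ≤ nxt g i := by
        rcases Nat.lt_or_ge (nxt g i) 3 with hlt | hge
        · have : nxt g i = 1 ∨ nxt g i = 2 := by omega
          rcases this with h1 | h1
          · exact absurd (hnxt1 h1) hc
          · have := hnxt2 h1; omega
        · exact hge
      exact hbZ (nxt g i) h3 hni.2 (h ▸ hvZ)
  have hpm : p = 0 := by omega
  rcases cls x hx hxZ with ⟨e1, f1⟩ | ⟨e1, f1⟩ | ⟨e1, f1⟩ <;>
    rcases cls y hy hyZ with ⟨e2, f2⟩ | ⟨e2, f2⟩ | ⟨e2, f2⟩ <;>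
    first
      | omega
      | exact hxy (by rw [e1, e2])

end SphereZ


section Count
variable {V : Type*} [DecidableEq V] {g p : ℕ} {a c : V} {b : ℕ → V} {Z : Finset V} {I : Finset ℕ}
  (hg : 2 < g)
  (hb : ∀ i ∈ Finset.Icc 1 (2*g), ∀ j ∈ Finset.Icc 1 (2*g), b i = b j → i = j)
  (hba : ∀ i ∈ Finset.Icc 1 (2*g), b i ≠ a ∧ b i ≠ c)
  (hac : a ≠ c)

include hg in
lemma nxt_closure (hI : I ⊆ Finset.Icc 1 (2*g)) (hne : I.Nonempty)
    (hcl : ∀ i ∈ I, nxt g i ∈ I) : Finset.Icc 1 (2*g) ⊆ I := by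
  have it : ∀ m, ∀ jj ∈ I, jj + m ≤ 2*g → jj + m ∈ I := by
    intro m
    induction m with
    | zero => intro jj h _; simpa using h
    | succ n ih =>
      intro jj hjj hle
      have h1 : jj + n ∈ I := ih jj hjj (by omega)
      have h2 := hcl _ h1
      have h3 : 1 ≤ jj := by have := hI hjj; simp only [Finset.mem_Icc] at this; omega
      rwa [nxt, if_neg (by omega), show jj + n + 1 = jj + (n+1) by omega] at h2
  obtain ⟨j₀, hj₀⟩ := hne
  have hj₀' := hI hj₀
  simp only [Finset.mem_Icc] at hj₀'
  have h2g : 2*g ∈ I := by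
    have := it (2*g - j₀) j₀ hj₀ (by omega)
    rwa [show j₀ + (2*g - j₀) = 2*g by omega] at this
  have h1 : (1:ℕ) ∈ I := by
    have := hcl _ h2g
    rwa [nxt, if_pos rfl] at this
  intro j hj
  simp only [Finset.mem_Icc] at hj
  have := it (j - 1) 1 h1 (by omega)
  rwa [show 1 + (j - 1) = j by omega] at this

include hg in
lemma J_card (hI : I ⊆ Finset.Icc 1 (2*g)) (hne : I.Nonempty) (hsz : I.card + 2 ≤ g) :
    I.card + 1 ≤ (I ∪ I.image (nxt g)).card := by
  have hIJ : I ⊆ I ∪ I.image (nxt g) := Finset.subset_union_left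
  by_cases heq : I ∪ I.image (nxt g) = I
  · exfalso
    have hcl : ∀ i ∈ I, nxt g i ∈ I := by
      intro i hi
      have : nxt g i ∈ I ∪ I.image (nxt g) :=
        Finset.mem_union_right _ (Finset.mem_image_of_mem _ hi)
      rwa [heq] at this
    have := Finset.card_le_card (nxt_closure hg hI hne hcl)
    rw [Nat.card_Icc] at this
    omega
  · exact Finset.card_lt_card (Finset.ssubset_iff_subset_ne.2 ⟨hIJ, fun h => heq h.symm⟩)

include hg hb in
lemma J_image_card (hI : I ⊆ Finset.Icc 1 (2*g)) :
    ((I ∪ I.image (nxt g)).image b).card = (I ∪ I.image (nxt g)).card := by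
  apply Finset.card_image_of_injOn
  intro u hu v hv huv
  have hmem : ∀ w ∈ I ∪ Finset.image (nxt g) I, w ∈ Finset.Icc 1 (2*g) := by
    intro w hw
    rcases Finset.mem_union.1 hw with h | h
    · exact hI h
    · obtain ⟨z, hz, rfl⟩ := Finset.mem_image.1 h
      exact nxt_mem hg (hI hz)
  exact hb u (hmem u hu) v (hmem v hv) huv

include hg in
lemma nxt_image_card (hI : I ⊆ Finset.Icc 1 (2*g)) : (I.image (nxt g)).card = I.card :=
  Finset.card_image_of_injOn (fun u hu v hv huv => nxt_inj hg (hI hu) (hI hv) huv)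

include hg hb hba in
lemma sup_tri_eq (hI : I ⊆ Finset.Icc 1 (2*g)) :
    I.sup (tri g p a c b) = (I.image (apx p a c)) ∪ ((I ∪ I.image (nxt g)).image b) := by
  ext x
  simp only [Finset.mem_sup, mem_tri, Finset.mem_union, Finset.mem_image]
  constructor
  · rintro ⟨i, hi, h | h | h⟩
    · exact Or.inl ⟨i, hi, h.symm⟩
    · exact Or.inr ⟨i, Or.inl hi, h.symm⟩
    · exact Or.inr ⟨nxt g i, Or.inr ⟨i, hi, rfl⟩, h.symm⟩
  · rintro (⟨i, hi, h⟩ | ⟨u, hu | ⟨i, hi, hu⟩, h⟩)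
    · exact ⟨i, hi, Or.inl h.symm⟩
    · exact ⟨u, hu, Or.inr (Or.inl h.symm)⟩
    · exact ⟨i, hi, Or.inr (Or.inr (by rw [hu]; exact h.symm))⟩

include hg hb hba hac in
lemma apx_disj_b (hI : I ⊆ Finset.Icc 1 (2*g)) :
    Disjoint (I.image (apx p a c)) ((I ∪ I.image (nxt g)).image b) := by
  rw [Finset.disjoint_left]
  rintro v hv hv'
  obtain ⟨i, hi, rfl⟩ := Finset.mem_image.1 hv
  obtain ⟨u, hu, he⟩ := Finset.mem_image.1 hv'
  have hu' : u ∈ Finset.Icc 1 (2*g) := by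
    rcases Finset.mem_union.1 hu with h | h
    · exact hI h
    · obtain ⟨z, hz, rfl⟩ := Finset.mem_image.1 h
      exact nxt_mem hg (hI hz)
  exact apx_ne_b hba hu' he.symm

include hg hb hba hac in
lemma sup_tri_card (hI : I ⊆ Finset.Icc 1 (2*g)) :
    (I.sup (tri g p a c b)).card
      = (I.image (apx p a c)).card + ((I ∪ I.image (nxt g)).card) := by
  rw [sup_tri_eq hg hb hba hI, Finset.card_union_of_disjoint (apx_disj_b hg hb hba hac hI),
    J_image_card hg hb hI]

include hg hb hba hac in
lemma PS2 (hp : p ≤ 1) (hI : I ⊆ dom g p) (hne : I.Nonempty) (hsz : I.card + 2 ≤ g) :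
    I.card + 2 ≤ (I.sup (tri g p a c b)).card := by
  have hI' : I ⊆ Finset.Icc 1 (2*g) := hI.trans dom_subset
  rw [sup_tri_card hg hb hba hac hI']
  have h1 := J_card hg hI' hne hsz
  have h2 : 1 ≤ (I.image (apx p a c)).card :=
    Finset.card_pos.2 (hne.image _)
  omega

include hg hb hba hac in
lemma PS3 (hp : p ≤ 1) (hI : I ⊆ dom g p) (hne : I.Nonempty) (hsz : I.card + 2 ≤ g)
    (h2 : 2 ≤ I.card) : I.card + 3 ≤ (I.sup (tri g p a c b)).card := by
  have hI' : I ⊆ Finset.Icc 1 (2*g) := hI.trans dom_subset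
  rw [sup_tri_card hg hb hba hac hI']
  by_cases hmix : (∃ i ∈ I, i % 2 = p) ∧ (∃ i ∈ I, i % 2 ≠ p)
  · -- both apexes used
    obtain ⟨⟨i₁, hi₁, hp₁⟩, ⟨i₂, hi₂, hp₂⟩⟩ := hmix
    have hA : ({c, a} : Finset V) ⊆ I.image (apx p a c) := by
      intro v hv
      rcases Finset.mem_insert.1 hv with rfl | hv
      · exact Finset.mem_image.2 ⟨i₁, hi₁, apx_eq_c hp₁⟩
      · rw [Finset.mem_singleton.1 hv]
        exact Finset.mem_image.2 ⟨i₂, hi₂, apx_eq_a hp₂⟩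
    have hA2 : 2 ≤ (I.image (apx p a c)).card := by
      have := Finset.card_le_card hA
      rwa [Finset.card_insert_of_notMem
        (by simp only [Finset.mem_singleton]; exact Ne.symm hac), Finset.card_singleton] at this
    have hJ := J_card hg hI' hne hsz
    omega
  · -- all same parity class
    have hall : ∀ i ∈ I, ∀ u ∈ I, i % 2 = u % 2 := by
      by_cases hcA : ∃ i ∈ I, i % 2 = p
      · have hB : ¬∃ i ∈ I, ¬(i % 2 = p) := fun hB => hmix ⟨hcA, hB⟩
        push_neg at hB
        intro i hi u hu
        rw [hB i hi, hB u hu]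
      · push_neg at hcA
        intro i hi u hu
        have h1 := hcA i hi
        have h2 := hcA u hu
        have h3 : i % 2 < 2 := Nat.mod_lt _ (by norm_num)
        have h4 : u % 2 < 2 := Nat.mod_lt _ (by norm_num)
        omega
    have hdisj : Disjoint I (I.image (nxt g)) := by
      rw [Finset.disjoint_left]
      rintro i hi hmem
      obtain ⟨u, hu, he⟩ := Finset.mem_image.1 hmem
      have hpar : (nxt g u) % 2 ≠ u % 2 := nxt_parity hg (hI' hu)
      rw [he] at hpar
      exact hpar (hall i hi u hu)
    have hcard : (I ∪ I.image (nxt g)).card = 2 * I.card := by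
      rw [Finset.card_union_of_disjoint hdisj, nxt_image_card hg hI']
      omega
    have hA : 1 ≤ (I.image (apx p a c)).card := Finset.card_pos.2 (hne.image _)
    omega

end Count


section Count2
variable {V : Type*} [DecidableEq V] {g p : ℕ} {a c : V} {b : ℕ → V} {Z : Finset V} {I : Finset ℕ}
  (hg : 2 < g)
  (hb : ∀ i ∈ Finset.Icc 1 (2*g), ∀ j ∈ Finset.Icc 1 (2*g), b i = b j → i = j)
  (hba : ∀ i ∈ Finset.Icc 1 (2*g), b i ≠ a ∧ b i ≠ c)
  (hac : a ≠ c)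
  (haZ : a ∈ Z) (hb1Z : b 1 ∈ Z) (hb2Z : b 2 ∈ Z) (hcZ : c ∉ Z)
  (hbZ : ∀ m, 3 ≤ m → m ≤ 2*g → b m ∉ Z)

include hg in
lemma J_card_eq (hI' : I ⊆ Finset.Icc 1 (2*g)) (hall : ∀ i ∈ I, ∀ u ∈ I, i % 2 = u % 2) :
    (I ∪ I.image (nxt g)).card = 2 * I.card := by
  have hdisj : Disjoint I (I.image (nxt g)) := by
    rw [Finset.disjoint_left]
    rintro i hi hmem
    obtain ⟨u, hu, he⟩ := Finset.mem_image.1 hmem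
    have hpar : (nxt g u) % 2 ≠ u % 2 := nxt_parity hg (hI' hu)
    rw [he] at hpar
    exact hpar (hall i hi u hu)
  rw [Finset.card_union_of_disjoint hdisj, nxt_image_card hg hI']
  omega

include hg hb hba in
lemma b_mem_sup (hI' : I ⊆ Finset.Icc 1 (2*g)) {u : ℕ} (hu : u ∈ I ∪ I.image (nxt g)) :
    b u ∈ I.sup (tri g p a c b) := by
  rw [sup_tri_eq hg hb hba hI']
  exact Finset.mem_union_right _ (Finset.mem_image.2 ⟨u, hu, rfl⟩)

include hg in
lemma J_sub_Icc (hI' : I ⊆ Finset.Icc 1 (2*g)) :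
    (I ∪ I.image (nxt g)) ⊆ Finset.Icc 1 (2*g) := by
  intro u hu
  rcases Finset.mem_union.1 hu with h | h
  · exact hI' h
  · obtain ⟨z, hz, rfl⟩ := Finset.mem_image.1 h
    exact nxt_mem hg (hI' hz)

include hg hb hba hac haZ hb1Z hb2Z hcZ hbZ in
lemma PS1 (hp : p ≤ 1) (hI : I ⊆ dom g p) (hne : I.Nonempty) (hsz : I.card + 2 ≤ g) :
    I.card ≤ ((I.sup (tri g p a c b)) \ Z).card := by
  have hI' : I ⊆ Finset.Icc 1 (2*g) := hI.trans dom_subset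
  set J := I ∪ I.image (nxt g) with hJdef
  have hJIcc : J ⊆ Finset.Icc 1 (2*g) := J_sub_Icc hg hI'
  -- the K part: b-vertices with index ≥ 3
  set K := (J \ {1, 2}).image b with hKdef
  have hKsub : K ⊆ (I.sup (tri g p a c b)) \ Z := by
    intro v hv
    obtain ⟨u, hu, rfl⟩ := Finset.mem_image.1 hv
    have hu1 := Finset.mem_sdiff.1 hu
    have huIcc := hJIcc hu1.1
    simp only [Finset.mem_Icc] at huIcc
    have hu3 : 3 ≤ u := by
      have : u ∉ ({1, 2} : Finset ℕ) := hu1.2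
      simp only [Finset.mem_insert, Finset.mem_singleton] at this
      omega
    exact Finset.mem_sdiff.2 ⟨b_mem_sup hg hb hba hI' hu1.1, hbZ u hu3 huIcc.2⟩
  have hKcard : K.card = (J \ {1, 2}).card := by
    apply Finset.card_image_of_injOn
    intro u hu v hv huv
    exact hb u (hJIcc (Finset.mem_sdiff.1 hu).1) v (hJIcc (Finset.mem_sdiff.1 hv).1) huv
  have hJ12 : J.card ≤ (J \ {1, 2}).card + 2 := by
    have hsub : J ⊆ (J \ {1, 2}) ∪ {1, 2} := by
      intro u hu
      by_cases h : u ∈ ({1, 2} : Finset ℕ)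
      · exact Finset.mem_union_right _ h
      · exact Finset.mem_union_left _ (Finset.mem_sdiff.2 ⟨hu, h⟩)
    calc J.card ≤ ((J \ {1, 2}) ∪ {1, 2}).card := Finset.card_le_card hsub
      _ ≤ (J \ {1, 2}).card + ({1, 2} : Finset ℕ).card := Finset.card_union_le _ _
      _ ≤ (J \ {1, 2}).card + 2 := by
          have : ({1, 2} : Finset ℕ).card ≤ 2 := by decide
          omega
  rcases Nat.lt_or_ge I.card 2 with hIsmall | hIbig
  · -- single triangle
    have h1 : I.card = 1 := by
      have := Finset.card_pos.2 hne; omega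
    obtain ⟨i, rfl⟩ := Finset.card_eq_one.1 h1
    obtain ⟨v, hv, hvnew⟩ := tri_has_new (b := b) (a := a) (c := c) hg hp
      (hI (Finset.mem_singleton_self i))
    have hvZ : v ∉ Z := by
      rcases hvnew with rfl | ⟨m, hm3, hm2g, rfl⟩
      · exact hcZ
      · exact hbZ m hm3 hm2g
    rw [h1]
    rw [Finset.sup_singleton]
    exact Finset.card_pos.2 ⟨v, Finset.mem_sdiff.2 ⟨hv, hvZ⟩⟩
  · by_cases hcase : ∃ i ∈ I, i % 2 = p
    · -- apex c is used
      obtain ⟨i, hi, hip⟩ := hcase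
      have hcU : c ∈ (I.sup (tri g p a c b)) \ Z := by
        refine Finset.mem_sdiff.2 ⟨?_, hcZ⟩
        rw [Finset.mem_sup]
        exact ⟨i, hi, mem_tri.2 (Or.inl (apx_eq_c hip).symm)⟩
      have hcK : c ∉ K := by
        intro hc
        obtain ⟨u, hu, he⟩ := Finset.mem_image.1 hc
        exact (hba u (hJIcc (Finset.mem_sdiff.1 hu).1)).2 he
      have hins : insert c K ⊆ (I.sup (tri g p a c b)) \ Z := by
        intro v hv
        rcases Finset.mem_insert.1 hv with rfl | hv
        · exact hcU
        · exact hKsub hv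
      have hJc := J_card hg hI' hne hsz
      rw [← hJdef] at hJc
      have := Finset.card_le_card hins
      rw [Finset.card_insert_of_notMem hcK] at this
      omega
    · -- apex a only
      push_neg at hcase
      have hall : ∀ i ∈ I, ∀ u ∈ I, i % 2 = u % 2 := by
        intro i hi u hu
        have h1 := hcase i hi
        have h2 := hcase u hu
        have h3 : i % 2 < 2 := Nat.mod_lt _ (by norm_num)
        have h4 : u % 2 < 2 := Nat.mod_lt _ (by norm_num)
        omega
      have hJeq := J_card_eq hg hI' hall
      rw [← hJdef] at hJeq
      have := Finset.card_le_card hKsub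
      omega

end Count2


section Bridge
variable {V : Type*} [DecidableEq V]

lemma sphereB_eq (g : ℕ) (a c : V) (b : ℕ → V) :
    sphereB g a c b = decS g 0 a c b ∪ decS g 1 a c b := rfl

lemma decS_subset_sphereB {g p : ℕ} (a c : V) (b : ℕ → V) (hp : p ≤ 1) :
    decS g p a c b ⊆ sphereB g a c b := by
  rw [sphereB_eq]
  interval_cases p
  · exact Finset.subset_union_left
  · exact Finset.subset_union_right

lemma triple_adj {G : SimpleGraph V} {u v w : V}
    (h1 : G.Adj u v) (h2 : G.Adj u w) (h3 : G.Adj v w) :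
    ∀ x ∈ ({u, v, w} : Finset V), ∀ y ∈ ({u, v, w} : Finset V), x ≠ y → G.Adj x y := by
  intro x hx y hy hxy
  simp only [Finset.mem_insert, Finset.mem_singleton] at hx hy
  rcases hx with rfl | rfl | rfl <;> rcases hy with rfl | rfl | rfl <;>
    first
      | exact absurd rfl hxy
      | assumption
      | exact h1.symm
      | exact h2.symm
      | exact h3.symm

lemma tri_eq {g p : ℕ} (a c : V) (b : ℕ → V) (i : ℕ) :
    tri g p a c b i = {apx p a c i, b i, b (nxt g i)} := rfl

end Bridge

end SphereAux


open SphereAux in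
/-- If `L` is a triangle-decomposable graph on the vertex set `Z`, then `L ∪ ○_g Z` has a
triangle-decomposition using only triangles of `𝒞 = ⋃_T 𝓑^○(T)`, of girth greater
than `g`.  Here the `g`-sphere-cover `○_g Z` is encoded by, for each 3-subset `T` of `Z`,
a labelling `aF T, bF T 1, bF T 2` of its vertices together with new vertices
`bF T 3, …, bF T (2g), cF T`, pairwise distinct, outside `Z`, and distinct across
different triples; `SC` is the graph whose edges are exactly the appended sphere edges. -/
theorem sphere_cover_high_girth_absorption {V : Type*} [DecidableEq V] (g : ℕ)
    (hg : 2 < g) (Z : Finset V) (aF cF : Finset V → V) (bF : Finset V → ℕ → V)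
    (hlabel : ∀ T ∈ Z.powersetCard 3, ({aF T, bF T 1, bF T 2} : Finset V) = T)
    (hinj : ∀ T ∈ Z.powersetCard 3,
      (∀ i ∈ Finset.Icc 1 (2 * g), ∀ j ∈ Finset.Icc 1 (2 * g),
        bF T i = bF T j → i = j) ∧
      (∀ i ∈ Finset.Icc 1 (2 * g), bF T i ≠ aF T ∧ bF T i ≠ cF T) ∧ aF T ≠ cF T)
    (hnew : ∀ T ∈ Z.powersetCard 3,
      cF T ∉ Z ∧ ∀ i, 3 ≤ i → i ≤ 2 * g → bF T i ∉ Z)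
    (hdisjoint : ∀ T ∈ Z.powersetCard 3, ∀ T' ∈ Z.powersetCard 3, T ≠ T' →
      ∀ v, (v = cF T ∨ ∃ i, 3 ≤ i ∧ i ≤ 2 * g ∧ v = bF T i) →
        ¬(v = cF T' ∨ ∃ i, 3 ≤ i ∧ i ≤ 2 * g ∧ v = bF T' i))
    (SC : SimpleGraph V)
    (hSC : ∀ x y, SC.Adj x y ↔ x ≠ y ∧
      ∃ T ∈ Z.powersetCard 3, sphereAdjP g (aF T) (cF T) (bF T) x y)
    (L : SimpleGraph V) (hLZ : ∀ x y, L.Adj x y → x ∈ Z ∧ y ∈ Z)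
    (hLdec : ∃ S₀ : Finset (Finset V), IsTriangleDecomp L S₀) :
    ∃ S : Finset (Finset V), IsTriangleDecomp (L ⊔ SC) S ∧
      (∀ t ∈ S, ∃ T ∈ Z.powersetCard 3, t ∈ sphereB g (aF T) (cF T) (bF T)) ∧
      GirthGt g S := by
  classical
  obtain ⟨S₀, hS₀tri, hS₀cov⟩ := hLdec
  set P := Z.powersetCard 3 with hPdef
  set pT : Finset V → ℕ := fun T => if T ∈ S₀ then 1 else 0 with hpTdef
  set S : Finset (Finset V) := P.biUnion
    (fun T => decS g (pT T) (aF T) (cF T) (bF T)) with hSdef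
  have hp_le : ∀ T, pT T ≤ 1 := by
    intro T; simp only [hpTdef]; split <;> omega
  have hpT1 : ∀ T, pT T = 1 ↔ T ∈ S₀ := by
    intro T; simp only [hpTdef]; split <;> rename_i h <;> simp [h]
  have hTZ : ∀ T ∈ P, T ⊆ Z := fun T hT => (Finset.mem_powersetCard.1 hT).1
  have haT : ∀ T ∈ P, aF T ∈ T := by
    intro T hT
    have h : aF T ∈ ({aF T, bF T 1, bF T 2} : Finset V) := Finset.mem_insert_self _ _
    rwa [hlabel T hT] at h
  have hb1T : ∀ T ∈ P, bF T 1 ∈ T := by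
    intro T hT
    have h : bF T 1 ∈ ({aF T, bF T 1, bF T 2} : Finset V) :=
      Finset.mem_insert_of_mem (Finset.mem_insert_self _ _)
    rwa [hlabel T hT] at h
  have hb2T : ∀ T ∈ P, bF T 2 ∈ T := by
    intro T hT
    have h : bF T 2 ∈ ({aF T, bF T 1, bF T 2} : Finset V) :=
      Finset.mem_insert_of_mem (Finset.mem_insert_of_mem (Finset.mem_singleton_self _))
    rwa [hlabel T hT] at h
  have hsph : ∀ T ∈ P,
      (∀ i ∈ Finset.Icc 1 (2*g), ∀ j ∈ Finset.Icc 1 (2*g), bF T i = bF T j → i = j) ∧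
      (∀ i ∈ Finset.Icc 1 (2*g), bF T i ≠ aF T ∧ bF T i ≠ cF T) ∧ aF T ≠ cF T ∧
      aF T ∈ Z ∧ bF T 1 ∈ Z ∧ bF T 2 ∈ Z ∧ cF T ∉ Z ∧
      (∀ m, 3 ≤ m → m ≤ 2*g → bF T m ∉ Z) := by
    intro T hT
    exact ⟨(hinj T hT).1, (hinj T hT).2.1, (hinj T hT).2.2, hTZ T hT (haT T hT),
      hTZ T hT (hb1T T hT), hTZ T hT (hb2T T hT), (hnew T hT).1,
      fun m h3 h2g => (hnew T hT).2 m h3 h2g⟩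
  -- membership of S₀ triangles in P
  have hS₀P : ∀ t ∈ S₀, t ∈ P := by
    intro t ht
    rw [Finset.mem_powersetCard]
    have hc := (hS₀tri t ht).1
    refine ⟨?_, hc⟩
    intro v hv
    obtain ⟨w, hw, hwv⟩ := Finset.exists_mem_ne (s := t) (by omega) v
    have := (hS₀tri t ht).2 v hv w hw (fun h => hwv h.symm)
    exact (hLZ v w this).1
  -- every decS triangle determines its sphere
  have hnewpred : ∀ T ∈ P, ∀ i ∈ dom g (pT T), ∀ v ∈ tri g (pT T) (aF T) (cF T) (bF T) i,
      v ∉ Z → (v = cF T ∨ ∃ m, 3 ≤ m ∧ m ≤ 2*g ∧ v = bF T m) := by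
    intro T hT i hidom v hv hvZ
    obtain ⟨hb, hba, hac, haZ, hb1Z, hb2Z, hcZ, hbZ⟩ := hsph T hT
    exact triZ_new hg haZ hb1Z hb2Z (dom_subset hidom) hv hvZ
  have hident : ∀ T ∈ P, ∀ T' ∈ P, ∀ t, t ∈ decS g (pT T) (aF T) (cF T) (bF T) →
      t ∈ decS g (pT T') (aF T') (cF T') (bF T') → T = T' := by
    intro T hT T' hT' t htT htT'
    by_contra hne
    obtain ⟨i, hidom, rfl⟩ := Finset.mem_image.1 htT
    obtain ⟨i', hidom', heq⟩ := Finset.mem_image.1 htT'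
    obtain ⟨hb, hba, hac, haZ, hb1Z, hb2Z, hcZ, hbZ⟩ := hsph T hT
    obtain ⟨v, hv, hvnew⟩ := tri_has_new (b := bF T) (a := aF T) (c := cF T) hg (hp_le T) hidom
    have hvZ : v ∉ Z := by
      rcases hvnew with rfl | ⟨m, hm3, hm2g, rfl⟩
      · exact hcZ
      · exact hbZ m hm3 hm2g
    have hv' : v ∈ tri g (pT T') (aF T') (cF T') (bF T') i' := by rw [heq]; exact hv
    exact hdisjoint T hT T' hT' hne v hvnew (hnewpred T' hT' i' hidom' v hv' hvZ)
  -- Part 1: all members of S are triangles of L ⊔ SC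
  have htri : ∀ t ∈ S, IsTriangle (L ⊔ SC) t := by
    intro t htS
    obtain ⟨T, hT, htT⟩ := Finset.mem_biUnion.1 htS
    obtain ⟨hb, hba, hac, haZ, hb1Z, hb2Z, hcZ, hbZ⟩ := hsph T hT
    obtain ⟨i, hidom, rfl⟩ := Finset.mem_image.1 htT
    have hiIcc := dom_subset hidom
    have hnIcc := nxt_mem hg hiIcc
    refine ⟨tri_card hg hb hba hac hiIcc, ?_⟩
    rw [mem_dom] at hidom
    simp only [Finset.mem_Icc] at hiIcc hnIcc
    have scA : ∀ j, 3 ≤ j → j ≤ 2*g → SC.Adj (aF T) (bF T j) := by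
      intro j h3 h2
      rw [hSC]
      exact ⟨fun he => (hba j (by simp only [Finset.mem_Icc]; omega)).1 he.symm,
        T, hT, Or.inl ⟨j, h3, h2, Or.inl ⟨rfl, rfl⟩⟩⟩
    have scC : ∀ j, 1 ≤ j → j ≤ 2*g → SC.Adj (cF T) (bF T j) := by
      intro j h1 h2
      rw [hSC]
      exact ⟨fun he => (hba j (by simp only [Finset.mem_Icc]; omega)).2 he.symm,
        T, hT, Or.inr (Or.inl ⟨j, h1, h2, Or.inl ⟨rfl, rfl⟩⟩)⟩
    have scB : ∀ j, 2 ≤ j → j + 1 ≤ 2*g → SC.Adj (bF T j) (bF T (j+1)) := by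
      intro j h2 hle
      rw [hSC]
      refine ⟨fun he => ?_, T, hT, Or.inr (Or.inr (Or.inl ⟨j, h2, by omega, Or.inl ⟨rfl, rfl⟩⟩))⟩
      have := hb j (by simp only [Finset.mem_Icc]; omega) (j+1)
        (by simp only [Finset.mem_Icc]; omega) he
      omega
    have scB2 : SC.Adj (bF T (2*g)) (bF T 1) := by
      rw [hSC]
      refine ⟨fun he => ?_, T, hT, Or.inr (Or.inr (Or.inr (Or.inl ⟨rfl, rfl⟩)))⟩
      have := hb (2*g) (by simp only [Finset.mem_Icc]; omega) 1
        (by simp only [Finset.mem_Icc]; omega) he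
      omega
    have lAdj : T ∈ S₀ → ∀ x ∈ T, ∀ y ∈ T, x ≠ y → L.Adj x y :=
      fun hS x hx y hy hne => (hS₀tri T hS).2 x hx y hy hne
    have hp := hp_le T
    have e3 : (L ⊔ SC).Adj (bF T i) (bF T (nxt g i)) := by
      rw [SimpleGraph.sup_adj]
      by_cases h2g : i = 2*g
      · subst h2g; rw [nxt, if_pos rfl]; exact Or.inr scB2
      · rw [nxt, if_neg h2g]
        by_cases h1 : i = 1
        · subst h1
          have hS : T ∈ S₀ := by
            rcases hidom.1 with h | h
            · exact (hpT1 T).1 h.1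
            · omega
          refine Or.inl (lAdj hS _ (hb1T T hT) _ (hb2T T hT) ?_)
          intro he
          have := hb 1 (by simp only [Finset.mem_Icc]; omega) 2
            (by simp only [Finset.mem_Icc]; omega) he
          omega
        · exact Or.inr (scB i (by omega) (by omega))
    have e1 : (L ⊔ SC).Adj (apx (pT T) (aF T) (cF T) i) (bF T i) := by
      rw [SimpleGraph.sup_adj]
      by_cases hip : i % 2 = pT T
      · rw [apx_eq_c hip]; exact Or.inr (scC i (by omega) hiIcc.2)
      · rw [apx_eq_a hip]
        rcases Nat.lt_or_ge i 3 with h3 | h3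
        · have : i = 1 ∨ i = 2 := by omega
          rcases this with rfl | rfl
          · exfalso; rcases hidom.1 with h | h <;> omega
          · have hS : T ∈ S₀ := by
              rw [← hpT1 T]; omega
            exact Or.inl (lAdj hS _ (haT T hT) _ (hb2T T hT)
              (fun he => (hba 2 (by simp only [Finset.mem_Icc]; omega)).1 he.symm))
        · exact Or.inr (scA i h3 hiIcc.2)
    have e2 : (L ⊔ SC).Adj (apx (pT T) (aF T) (cF T) i) (bF T (nxt g i)) := by
      rw [SimpleGraph.sup_adj]
      by_cases hip : i % 2 = pT T
      · rw [apx_eq_c hip]; exact Or.inr (scC _ (by omega) hnIcc.2)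
      · rw [apx_eq_a hip]
        rcases Nat.lt_or_ge (nxt g i) 3 with h3 | h3
        · have hn12 : nxt g i = 1 ∨ nxt g i = 2 := by omega
          have hnxt : nxt g i = if i = 2*g then 1 else i + 1 := rfl
          rcases hn12 with h1 | h1
          · have hi2g : i = 2*g := by
              rw [h1] at hnxt; split at hnxt <;> omega
            have hS : T ∈ S₀ := by
              rw [← hpT1 T]
              have : i % 2 = 0 := by omega
              omega
            rw [h1]
            exact Or.inl (lAdj hS _ (haT T hT) _ (hb1T T hT)
              (fun he => (hba 1 (by simp only [Finset.mem_Icc]; omega)).1 he.symm))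
          · exfalso
            have hi1 : i = 1 := by
              rw [h1] at hnxt; split at hnxt <;> omega
            rcases hidom.1 with h | h <;> omega
        · exact Or.inr (scA _ h3 hnIcc.2)
    rw [tri_eq]
    exact triple_adj e1 e2 e3
  -- Part 2: membership in sphereB
  have hsB : ∀ t ∈ S, ∃ T ∈ P, t ∈ sphereB g (aF T) (cF T) (bF T) := by
    intro t htS
    obtain ⟨T, hT, htT⟩ := Finset.mem_biUnion.1 htS
    exact ⟨T, hT, decS_subset_sphereB _ _ _ (hp_le T) htT⟩
  -- Part 3: uniqueness of covering triangles
  have huniq : ∀ x y : V, x ≠ y → ∀ t₁ ∈ S, ∀ t₂ ∈ S,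
      x ∈ t₁ → y ∈ t₁ → x ∈ t₂ → y ∈ t₂ → t₁ = t₂ := by
    intro x y hxy t₁ ht₁ t₂ ht₂ hx1 hy1 hx2 hy2
    obtain ⟨T₁, hT₁, ht₁T⟩ := Finset.mem_biUnion.1 ht₁
    obtain ⟨T₂, hT₂, ht₂T⟩ := Finset.mem_biUnion.1 ht₂
    obtain ⟨i₁, hi₁dom, he₁⟩ := Finset.mem_image.1 ht₁T
    obtain ⟨i₂, hi₂dom, he₂⟩ := Finset.mem_image.1 ht₂T
    obtain ⟨hb₁, hba₁, hac₁, haZ₁, hb1Z₁, hb2Z₁, hcZ₁, hbZ₁⟩ := hsph T₁ hT₁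
    obtain ⟨hb₂, hba₂, hac₂, haZ₂, hb1Z₂, hb2Z₂, hcZ₂, hbZ₂⟩ := hsph T₂ hT₂
    subst he₁; subst he₂
    have hTT : T₁ = T₂ := by
      by_cases hZ : x ∈ Z ∧ y ∈ Z
      · -- both in Z: use S₀-uniqueness
        have hp₁ : pT T₁ = 1 := triZ_two hg hcZ₁ hbZ₁ (hp_le T₁) hi₁dom hxy hx1 hy1 hZ.1 hZ.2
        have hp₂ : pT T₂ = 1 := triZ_two hg hcZ₂ hbZ₂ (hp_le T₂) hi₂dom hxy hx2 hy2 hZ.1 hZ.2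
        have hS₁ : T₁ ∈ S₀ := (hpT1 T₁).1 hp₁
        have hS₂ : T₂ ∈ S₀ := (hpT1 T₂).1 hp₂
        have hxT₁ : x ∈ T₁ := by
          have hmm : x ∈ ({aF T₁, bF T₁ 1, bF T₁ 2} : Finset V) := by
            rcases triZ_sub hg haZ₁ hcZ₁ hbZ₁ (dom_subset hi₁dom) hx1 hZ.1 with h | h | h <;>
              simp [h]
          rwa [hlabel T₁ hT₁] at hmm
        have hyT₁ : y ∈ T₁ := by
          have hmm : y ∈ ({aF T₁, bF T₁ 1, bF T₁ 2} : Finset V) := by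
            rcases triZ_sub hg haZ₁ hcZ₁ hbZ₁ (dom_subset hi₁dom) hy1 hZ.2 with h | h | h <;>
              simp [h]
          rwa [hlabel T₁ hT₁] at hmm
        have hxT₂ : x ∈ T₂ := by
          have hmm : x ∈ ({aF T₂, bF T₂ 1, bF T₂ 2} : Finset V) := by
            rcases triZ_sub hg haZ₂ hcZ₂ hbZ₂ (dom_subset hi₂dom) hx2 hZ.1 with h | h | h <;>
              simp [h]
          rwa [hlabel T₂ hT₂] at hmm
        have hyT₂ : y ∈ T₂ := by
          have hmm : y ∈ ({aF T₂, bF T₂ 1, bF T₂ 2} : Finset V) := by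
            rcases triZ_sub hg haZ₂ hcZ₂ hbZ₂ (dom_subset hi₂dom) hy2 hZ.2 with h | h | h <;>
              simp [h]
          rwa [hlabel T₂ hT₂] at hmm
        have hLxy : L.Adj x y := (hS₀tri T₁ hS₁).2 x hxT₁ y hyT₁ hxy
        obtain ⟨t₀, _, hun⟩ := hS₀cov x y hLxy
        rw [hun T₁ ⟨hS₁, hxT₁, hyT₁⟩, hun T₂ ⟨hS₂, hxT₂, hyT₂⟩]
      · -- some vertex outside Z identifies the sphere
        have hv : ∃ v, (v ∈ tri g (pT T₁) (aF T₁) (cF T₁) (bF T₁) i₁) ∧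
            (v ∈ tri g (pT T₂) (aF T₂) (cF T₂) (bF T₂) i₂) ∧ v ∉ Z := by
          by_cases hxZ : x ∈ Z
          · refine ⟨y, hy1, hy2, ?_⟩
            intro hyZ; exact hZ ⟨hxZ, hyZ⟩
          · exact ⟨x, hx1, hx2, hxZ⟩
        obtain ⟨v, hv1, hv2, hvZ⟩ := hv
        by_contra hne
        exact hdisjoint T₁ hT₁ T₂ hT₂ hne v
          (hnewpred T₁ hT₁ i₁ hi₁dom v hv1 hvZ)
          (hnewpred T₂ hT₂ i₂ hi₂dom v hv2 hvZ)
    subst hTT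
    have : i₁ = i₂ := tri_unique hg hb₁ hba₁ hac₁ (hp_le T₁) hi₁dom hi₂dom hxy hx1 hx2 hy1 hy2
    rw [this]
  -- Part 4: coverage existence
  have hcovex : ∀ x y : V, (L ⊔ SC).Adj x y → ∃ t ∈ S, x ∈ t ∧ y ∈ t := by
    intro x y hxy
    rw [SimpleGraph.sup_adj] at hxy
    rcases hxy with hL | hSCxy
    · -- L edge
      obtain ⟨t₀, ⟨ht₀S₀, hx, hy⟩, _⟩ := hS₀cov x y hL
      have hT := hS₀P t₀ ht₀S₀
      have hp1 : pT t₀ = 1 := (hpT1 t₀).2 ht₀S₀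
      obtain ⟨hb, hba, hac, haZ, hb1Z, hb2Z, hcZ, hbZ⟩ := hsph t₀ hT
      have hne := hL.ne
      rw [← hlabel t₀ hT] at hx hy
      simp only [Finset.mem_insert, Finset.mem_singleton] at hx hy
      have key : ∃ i ∈ dom g 1, x ∈ tri g 1 (aF t₀) (cF t₀) (bF t₀) i ∧
          y ∈ tri g 1 (aF t₀) (cF t₀) (bF t₀) i := by
        have hmem2g : (2*g) ∈ dom g 1 := by rw [mem_dom]; omega
        have hmem2 : (2:ℕ) ∈ dom g 1 := by rw [mem_dom]; omega
        have hmem1 : (1:ℕ) ∈ dom g 1 := by rw [mem_dom]; omega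
        have t2g_a : aF t₀ ∈ tri g 1 (aF t₀) (cF t₀) (bF t₀) (2*g) := by
          rw [mem_tri, apx_eq_a (by omega)]; exact Or.inl rfl
        have t2g_b1 : bF t₀ 1 ∈ tri g 1 (aF t₀) (cF t₀) (bF t₀) (2*g) := by
          rw [mem_tri, nxt, if_pos rfl]; exact Or.inr (Or.inr rfl)
        have t2_a : aF t₀ ∈ tri g 1 (aF t₀) (cF t₀) (bF t₀) 2 := by
          rw [mem_tri, apx_eq_a (by omega)]; exact Or.inl rfl
        have t2_b2 : bF t₀ 2 ∈ tri g 1 (aF t₀) (cF t₀) (bF t₀) 2 := by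
          rw [mem_tri]; exact Or.inr (Or.inl rfl)
        have t1_b1 : bF t₀ 1 ∈ tri g 1 (aF t₀) (cF t₀) (bF t₀) 1 := by
          rw [mem_tri]; exact Or.inr (Or.inl rfl)
        have t1_b2 : bF t₀ 2 ∈ tri g 1 (aF t₀) (cF t₀) (bF t₀) 1 := by
          rw [mem_tri, nxt, if_neg (by omega)]; exact Or.inr (Or.inr rfl)
        rcases hx with rfl | rfl | rfl <;> rcases hy with rfl | rfl | rfl
        · exact absurd rfl hne
        · exact ⟨2*g, hmem2g, t2g_a, t2g_b1⟩
        · exact ⟨2, hmem2, t2_a, t2_b2⟩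
        · exact ⟨2*g, hmem2g, t2g_b1, t2g_a⟩
        · exact absurd rfl hne
        · exact ⟨1, hmem1, t1_b1, t1_b2⟩
        · exact ⟨2, hmem2, t2_b2, t2_a⟩
        · exact ⟨1, hmem1, t1_b2, t1_b1⟩
        · exact absurd rfl hne
      obtain ⟨i, hidom, hxi, hyi⟩ := key
      refine ⟨tri g (pT t₀) (aF t₀) (cF t₀) (bF t₀) i, ?_, ?_, ?_⟩
      · rw [hSdef]
        refine Finset.mem_biUnion.2 ⟨t₀, hT, Finset.mem_image.2 ⟨i, ?_, rfl⟩⟩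
        rw [hp1]; exact hidom
      · rw [hp1]; exact hxi
      · rw [hp1]; exact hyi
    · -- SC edge
      rw [hSC] at hSCxy
      obtain ⟨hne, T, hT, hadj⟩ := hSCxy
      obtain ⟨hb, hba, hac, haZ, hb1Z, hb2Z, hcZ, hbZ⟩ := hsph T hT
      have hp := hp_le T
      have key : ∃ i ∈ dom g (pT T), x ∈ tri g (pT T) (aF T) (cF T) (bF T) i ∧
          y ∈ tri g (pT T) (aF T) (cF T) (bF T) i := by
        rcases hadj with ⟨j, h3, h2g, hc⟩ | ⟨j, h1, h2g, hc⟩ | ⟨j, h2, h2g, hc⟩ | hc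
        · obtain ⟨i, hidom, hai, hbi⟩ := cover_a (b := bF T) (j := j) hg hp
            (by simp only [Finset.mem_Icc]; omega) (fun _ => h3)
          rcases hc with ⟨rfl, rfl⟩ | ⟨rfl, rfl⟩
          · exact ⟨i, hidom, hai, hbi⟩
          · exact ⟨i, hidom, hbi, hai⟩
        · obtain ⟨i, hidom, hci, hbi⟩ := cover_c (b := bF T) (j := j) hg hp
            (by simp only [Finset.mem_Icc]; omega)
          rcases hc with ⟨rfl, rfl⟩ | ⟨rfl, rfl⟩
          · exact ⟨i, hidom, hci, hbi⟩
          · exact ⟨i, hidom, hbi, hci⟩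
        · have hj2g : j + 1 ≤ 2*g := by omega
          obtain ⟨hbj, hbj1⟩ := cover_bb (p := pT T) (a := aF T) (c := cF T) (b := bF T)
            hg (j := j) (by omega) (by omega)
          have hjdom : j ∈ dom g (pT T) := by rw [mem_dom]; omega
          rcases hc with ⟨rfl, rfl⟩ | ⟨rfl, rfl⟩
          · exact ⟨j, hjdom, hbj, hbj1⟩
          · exact ⟨j, hjdom, hbj1, hbj⟩
        · obtain ⟨hb2g, hb1'⟩ := cover_b2g (p := pT T) (a := aF T) (c := cF T) (b := bF T) hg
          have h2gdom : 2*g ∈ dom g (pT T) := two_g_mem_dom hg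
          rcases hc with ⟨rfl, rfl⟩ | ⟨rfl, rfl⟩
          · exact ⟨2*g, h2gdom, hb2g, hb1'⟩
          · exact ⟨2*g, h2gdom, hb1', hb2g⟩
      obtain ⟨i, hidom, hxi, hyi⟩ := key
      exact ⟨tri g (pT T) (aF T) (cF T) (bF T) i,
        Finset.mem_biUnion.2 ⟨T, hT, Finset.mem_image.2 ⟨i, hidom, rfl⟩⟩, hxi, hyi⟩
  refine ⟨S, ⟨htri, ?_⟩, hsB, ?_⟩
  · intro x y hxy
    obtain ⟨t, htS, hx, hy⟩ := hcovex x y hxy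
    exact ⟨t, ⟨htS, hx, hy⟩, fun t' ht' => huniq x y hxy.ne t' ht'.1 t htS ht'.2.1 ht'.2.2 hx hy⟩
  · -- girth greater than g
    intro C hCS hC2 hCg
    set F : Finset V → Finset V := fun t =>
      if h : ∃ T, T ∈ P ∧ t ∈ decS g (pT T) (aF T) (cF T) (bF T) then h.choose else ∅
      with hFdef
    have hF : ∀ t ∈ C, F t ∈ P ∧ t ∈ decS g (pT (F t)) (aF (F t)) (cF (F t)) (bF (F t)) := by
      intro t ht
      obtain ⟨T, hT, htT⟩ := Finset.mem_biUnion.1 (hCS ht)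
      have hex : ∃ T, T ∈ P ∧ t ∈ decS g (pT T) (aF T) (cF T) (bF T) := ⟨T, hT, htT⟩
      have he : F t = hex.choose := by rw [hFdef]; exact dif_pos hex
      rw [he]
      exact hex.choose_spec
    set CT : Finset V → Finset (Finset V) := fun T => C.filter (fun t => F t = T) with hCTdef
    set IT : Finset V → Finset ℕ := fun T => (dom g (pT T)).filter
      (fun i => tri g (pT T) (aF T) (cF T) (bF T) i ∈ CT T) with hITdef
    set Ts := C.image F with hTsdef
    set W := C.sup id with hWdef
    have hCpart : C = Ts.biUnion (fun T => CT T) := by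
      ext t
      simp only [hTsdef, hCTdef, Finset.mem_biUnion, Finset.mem_filter, Finset.mem_image]
      constructor
      · intro ht; exact ⟨F t, ⟨t, ht, rfl⟩, ht, rfl⟩
      · rintro ⟨T, _, ht, _⟩; exact ht
    have hCTdisj : ∀ T ∈ Ts, ∀ T' ∈ Ts, T ≠ T' → Disjoint (CT T) (CT T') := by
      intro T _ T' _ hne
      rw [Finset.disjoint_left]
      intro t ht ht'
      simp only [hCTdef, Finset.mem_filter] at ht ht'
      exact hne (ht.2 ▸ ht'.2 ▸ rfl)
    have hk : C.card = ∑ T ∈ Ts, (CT T).card := by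
      conv_lhs => rw [hCpart]
      exact Finset.card_biUnion hCTdisj
    have hTsP : ∀ T ∈ Ts, T ∈ P := by
      intro T hT
      obtain ⟨t, ht, rfl⟩ := Finset.mem_image.1 hT
      exact (hF t ht).1
    have hCT_eq : ∀ T ∈ Ts, CT T = (IT T).image (tri g (pT T) (aF T) (cF T) (bF T)) := by
      intro T hT
      ext t
      constructor
      · intro htCT
        have htCT' := htCT
        simp only [hCTdef, Finset.mem_filter] at htCT'
        have ht2 := (hF t htCT'.1).2
        rw [htCT'.2] at ht2
        obtain ⟨i, hidom, hEq⟩ := Finset.mem_image.1 ht2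
        exact Finset.mem_image.2 ⟨i, Finset.mem_filter.2 ⟨hidom, by rw [hEq]; exact htCT⟩, hEq⟩
      · intro ht
        obtain ⟨i, hiIT, rfl⟩ := Finset.mem_image.1 ht
        exact (Finset.mem_filter.1 hiIT).2
    have hITsub : ∀ T, IT T ⊆ dom g (pT T) := by
      intro T; simp only [hITdef]; exact Finset.filter_subset _ _
    have hITcard : ∀ T ∈ Ts, (IT T).card = (CT T).card := by
      intro T hT
      obtain ⟨hb, hba, hac, haZ, hb1Z, hb2Z, hcZ, hbZ⟩ := hsph T (hTsP T hT)
      rw [hCT_eq T hT, Finset.card_image_of_injOn]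
      intro u hu v hv huv
      exact tri_inj_dom hg hb hba hac (hp_le T) (hITsub T hu) (hITsub T hv) huv
    have hCTsup : ∀ T ∈ Ts, (CT T).sup id = (IT T).sup (tri g (pT T) (aF T) (cF T) (bF T)) := by
      intro T hT
      rw [hCT_eq T hT, Finset.sup_image]
      rfl
    have hITne : ∀ T ∈ Ts, (IT T).Nonempty := by
      intro T hT
      obtain ⟨t, ht, rfl⟩ := Finset.mem_image.1 hT
      have : t ∈ CT (F t) := by
        simp [hCTdef, ht]
      rw [← Finset.card_pos, hITcard _ hT]
      exact Finset.card_pos.2 ⟨t, this⟩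
    have hITsz : ∀ T ∈ Ts, (IT T).card + 2 ≤ g := by
      intro T hT
      have h1 : (CT T).card ≤ C.card := Finset.card_le_card (Finset.filter_subset _ _)
      have := hITcard T hT
      omega
    have hsupW : ∀ T ∈ Ts, (CT T).sup id ⊆ W := by
      intro T hT
      have hsub : CT T ⊆ C := by
        intro t ht
        simp only [hCTdef, Finset.mem_filter] at ht
        exact ht.1
      intro v hv
      obtain ⟨t, ht, hvt⟩ := Finset.mem_sup.1 hv
      exact Finset.mem_sup.2 ⟨t, hsub ht, hvt⟩
    have hWZ : W.card = (W ∩ Z).card + (W \ Z).card :=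
      (Finset.card_inter_add_card_sdiff W Z).symm
    have hsplitT : ∀ T ∈ Ts, ((CT T).sup id).card
        = ((CT T).sup id ∩ Z).card + ((CT T).sup id \ Z).card :=
      fun T _ => (Finset.card_inter_add_card_sdiff _ _).symm
    have hzTle : ∀ T ∈ Ts, ((CT T).sup id ∩ Z).card ≤ (W ∩ Z).card := by
      intro T hT
      exact Finset.card_le_card (Finset.inter_subset_inter (hsupW T hT) Finset.Subset.rfl)
    have hnewv : ∀ T ∈ Ts, ∀ v ∈ ((CT T).sup id) \ Z,
        (v = cF T ∨ ∃ m, 3 ≤ m ∧ m ≤ 2*g ∧ v = bF T m) := by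
      intro T hT v hv
      obtain ⟨hvs, hvZ⟩ := Finset.mem_sdiff.1 hv
      obtain ⟨t, htCT, hvt⟩ := Finset.mem_sup.1 hvs
      simp only [hCTdef, Finset.mem_filter] at htCT
      have ht2 := (hF t htCT.1).2
      rw [htCT.2] at ht2
      obtain ⟨i, hidom, hEq⟩ := Finset.mem_image.1 ht2
      refine hnewpred T (hTsP T hT) i hidom v ?_ hvZ
      rw [hEq]
      exact hvt
    have hWsdiff : W \ Z = Ts.biUnion (fun T => ((CT T).sup id) \ Z) := by
      ext v
      constructor
      · intro hv
        obtain ⟨hvW, hvZ⟩ := Finset.mem_sdiff.1 hv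
        obtain ⟨t, htC, hvt⟩ := Finset.mem_sup.1 hvW
        refine Finset.mem_biUnion.2 ⟨F t, Finset.mem_image_of_mem F htC, Finset.mem_sdiff.2 ⟨?_, hvZ⟩⟩
        refine Finset.mem_sup.2 ⟨t, ?_, hvt⟩
        simp [hCTdef, htC]
      · intro hv
        obtain ⟨T, hTTs, hvT⟩ := Finset.mem_biUnion.1 hv
        obtain ⟨h1, h2⟩ := Finset.mem_sdiff.1 hvT
        exact Finset.mem_sdiff.2 ⟨hsupW T hTTs h1, h2⟩
    have hNcard : (W \ Z).card = ∑ T ∈ Ts, (((CT T).sup id) \ Z).card := by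
      rw [hWsdiff]
      refine Finset.card_biUnion ?_
      intro T hT T' hT' hne
      rw [Function.onFun, Finset.disjoint_left]
      intro v hv hv'
      exact hdisjoint T (hTsP T hT) T' (hTsP T' hT') hne v (hnewv T hT v hv) (hnewv T' hT' v hv')
    -- per-sphere inequalities
    have hPS1 : ∀ T ∈ Ts, (CT T).card ≤ (((CT T).sup id) \ Z).card := by
      intro T hT
      obtain ⟨hb, hba, hac, haZ, hb1Z, hb2Z, hcZ, hbZ⟩ := hsph T (hTsP T hT)
      rw [hCTsup T hT, ← hITcard T hT]
      exact PS1 hg hb hba hac haZ hb1Z hb2Z hcZ hbZ (hp_le T) (hITsub T) (hITne T hT)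
        (hITsz T hT)
    have hPS2 : ∀ T ∈ Ts, (CT T).card + 2 ≤ ((CT T).sup id).card := by
      intro T hT
      obtain ⟨hb, hba, hac, _, _, _, _, _⟩ := hsph T (hTsP T hT)
      rw [hCTsup T hT, ← hITcard T hT]
      exact PS2 hg hb hba hac (hp_le T) (hITsub T) (hITne T hT) (hITsz T hT)
    have hPS3 : ∀ T ∈ Ts, 2 ≤ (CT T).card → (CT T).card + 3 ≤ ((CT T).sup id).card := by
      intro T hT h2
      obtain ⟨hb, hba, hac, _, _, _, _, _⟩ := hsph T (hTsP T hT)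
      rw [hCTsup T hT, ← hITcard T hT]
      refine PS3 hg hb hba hac (hp_le T) (hITsub T) (hITne T hT) (hITsz T hT) ?_
      rw [hITcard T hT]
      exact h2
    -- case on the number of spheres
    have hTsne : Ts.Nonempty := Finset.Nonempty.image (Finset.card_pos.1 (by omega)) F
    rcases Nat.lt_or_ge Ts.card 2 with hr1 | hr2
    · -- a single sphere
      have hr : Ts.card = 1 := by
        have := Finset.card_pos.2 hTsne; omega
      obtain ⟨T, hTs_eq⟩ := Finset.card_eq_one.1 hr
      have hTmem : T ∈ Ts := hTs_eq ▸ Finset.mem_singleton_self T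
      have hCeq : C = CT T := by
        rw [hCpart, hTs_eq, Finset.singleton_biUnion]
      have := hPS3 T hTmem (hCeq ▸ hC2)
      rw [← hCeq] at this
      exact this
    · -- at least two spheres
      rcases Nat.lt_or_ge (W ∩ Z).card 3 with hzlt | hz3
      · rcases Nat.lt_or_ge (W ∩ Z).card 2 with hz1 | hz2'
        · -- z ≤ 1
          have hper : ∀ T ∈ Ts, (CT T).card + (2 - (W ∩ Z).card)
              ≤ (((CT T).sup id) \ Z).card := by
            intro T hT
            have h1 := hPS2 T hT
            have h2 := hsplitT T hT
            have h3 := hzTle T hT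
            omega
          have hsum := Finset.sum_le_sum hper
          rw [Finset.sum_add_distrib, Finset.sum_const, smul_eq_mul] at hsum
          have hmul : 2 * (2 - (W ∩ Z).card) ≤ Ts.card * (2 - (W ∩ Z).card) :=
            Nat.mul_le_mul_right _ hr2
          omega
        · -- z = 2
          have hz2 : (W ∩ Z).card = 2 := by omega
          by_cases hbig : ∃ T ∈ Ts, (CT T).card + 1 ≤ (((CT T).sup id) \ Z).card
          · have hlt : ∑ T ∈ Ts, (CT T).card < ∑ T ∈ Ts, (((CT T).sup id) \ Z).card := by
              obtain ⟨T₀, hT₀, hT₀lt⟩ := hbig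
              exact Finset.sum_lt_sum (fun T hT => hPS1 T hT) ⟨T₀, hT₀, by omega⟩
            omega
          · exfalso
            push_neg at hbig
            have claim : ∀ T ∈ Ts, T ∈ S₀ ∧ (W ∩ Z) ⊆ T := by
              intro T hT
              obtain ⟨hb, hba, hac, haZ, hb1Z, hb2Z, hcZ, hbZ⟩ := hsph T (hTsP T hT)
              have hn_eq : (((CT T).sup id) \ Z).card = (CT T).card := by
                have := hbig T hT
                have := hPS1 T hT
                omega
              have hsplit := hsplitT T hT
              have hz2T : ((CT T).sup id ∩ Z).card = 2 := by
                have h1 := hPS2 T hT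
                have h2 := hzTle T hT
                omega
              have hk1 : (CT T).card = 1 := by
                have hpos : 1 ≤ (CT T).card := by
                  rw [← hITcard T hT]
                  exact Finset.card_pos.2 (hITne T hT)
                by_contra hk2
                have := hPS3 T hT (by omega)
                omega
              -- the single triangle
              have hIT1 : (IT T).card = 1 := by rw [hITcard T hT]; exact hk1
              obtain ⟨i, hIT_eq⟩ := Finset.card_eq_one.1 hIT1
              have hidom : i ∈ dom g (pT T) := hITsub T (hIT_eq ▸ Finset.mem_singleton_self i)
              have hsup_eq : (CT T).sup id = tri g (pT T) (aF T) (cF T) (bF T) i := by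
                rw [hCTsup T hT, hIT_eq, Finset.sup_singleton]
              obtain ⟨x, hx, y, hy, hxy⟩ := Finset.one_lt_card.1 (by omega :
                1 < ((CT T).sup id ∩ Z).card)
              rw [hsup_eq] at hx hy
              obtain ⟨hxt, hxZ⟩ := Finset.mem_inter.1 hx
              obtain ⟨hyt, hyZ⟩ := Finset.mem_inter.1 hy
              have hp1 : pT T = 1 :=
                triZ_two hg hcZ hbZ (hp_le T) hidom hxy hxt hyt hxZ hyZ
              refine ⟨(hpT1 T).1 hp1, ?_⟩
              -- W ∩ Z = sup ∩ Z ⊆ T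
              have hZeq : ((CT T).sup id ∩ Z) = W ∩ Z := by
                apply Finset.eq_of_subset_of_card_le
                · exact Finset.inter_subset_inter (hsupW T hT) Finset.Subset.rfl
                · omega
              rw [← hZeq]
              intro v hv
              obtain ⟨hvt, hvZ⟩ := Finset.mem_inter.1 hv
              rw [hsup_eq] at hvt
              have hmm : v ∈ ({aF T, bF T 1, bF T 2} : Finset V) := by
                rcases triZ_sub hg haZ hcZ hbZ (dom_subset hidom) hvt hvZ with h | h | h <;>
                  simp [h]
              rwa [hlabel T (hTsP T hT)] at hmm
            obtain ⟨T, hT, T', hT', hne⟩ := Finset.one_lt_card.1 hr2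
            obtain ⟨hTS₀, hTsub⟩ := claim T hT
            obtain ⟨hTS₀', hTsub'⟩ := claim T' hT'
            obtain ⟨x, hx, y, hy, hxy⟩ := Finset.one_lt_card.1 (by omega : 1 < (W ∩ Z).card)
            have hLxy : L.Adj x y := (hS₀tri T hTS₀).2 x (hTsub hx) y (hTsub hy) hxy
            obtain ⟨t₀, _, hun⟩ := hS₀cov x y hLxy
            exact hne (by rw [hun T ⟨hTS₀, hTsub hx, hTsub hy⟩, hun T' ⟨hTS₀', hTsub' hx, hTsub' hy⟩])
      · -- z ≥ 3
        have hsum := Finset.sum_le_sum hPS1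
        omega
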